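/- For every n ≥ 1 and every natural number k with n/2 < k ≤ n, the number of permutations of Fin n that contain a cycle of length exactly k equals n!/k. -/

import Mathlib

/-- The orbit (cycle) of `i` under the permutation `σ` of `Fin n`, as a finset.
For `n ≥ 1` the powers `σ^0, …, σ^(n-1)` applied to `i` exhaust the orbit. -/
def cycleOf {n : ℕ} (σ : Equiv.Perm (Fin n)) (i : Fin n) : Finset (Fin n) :=
  (Finset.range n).image (fun k => (σ ^ k) i)

namespace CardPermAux

open Finset Function Equiv

variable {n : ℕ}

lemma mem_pp (σ : Equiv.Perm (Fin n)) (x : Fin n) : x ∈ Function.periodicPts ⇑σ :=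
  Function.mk_mem_periodicPts (orderOf_pos σ)
    (by show (⇑σ)^[orderOf σ] x = x
        rw [Equiv.Perm.iterate_eq_pow, pow_orderOf_eq_one]; rfl)

lemma mp_pos (σ : Equiv.Perm (Fin n)) (x : Fin n) :
    0 < Function.minimalPeriod ⇑σ x :=
  Function.minimalPeriod_pos_of_mem_periodicPts (mem_pp σ x)

lemma pow_mod (σ : Equiv.Perm (Fin n)) (x : Fin n) (m : ℕ) :
    (σ ^ (m % Function.minimalPeriod ⇑σ x)) x = (σ ^ m) x := by
  exact Function.iterate_mod_minimalPeriod_eq (f := ⇑σ) (x := x) (n := m)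

lemma pow_injOn (σ : Equiv.Perm (Fin n)) (x : Fin n) :
    Set.InjOn (fun m => (σ ^ m) x) ↑(Finset.range (Function.minimalPeriod ⇑σ x)) := by
  rw [Finset.coe_range]
  intro a ha b hb hab
  exact Function.iterate_injOn_Iio_minimalPeriod ha hb (by simpa [Equiv.Perm.iterate_eq_pow] using hab)

lemma mp_le (σ : Equiv.Perm (Fin n)) (x : Fin n) :
    Function.minimalPeriod ⇑σ x ≤ n := by
  classical
  have h1 : ((Finset.range (Function.minimalPeriod ⇑σ x)).image fun m => (σ ^ m) x).card
      = Function.minimalPeriod ⇑σ x := by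
    rw [Finset.card_image_of_injOn (pow_injOn σ x), Finset.card_range]
  calc Function.minimalPeriod ⇑σ x
      = ((Finset.range (Function.minimalPeriod ⇑σ x)).image fun m => (σ ^ m) x).card := h1.symm
    _ ≤ Finset.univ.card := Finset.card_le_univ _
    _ = n := by simp

lemma cycleOf_eq (σ : Equiv.Perm (Fin n)) (x : Fin n) :
    cycleOf σ x
      = (Finset.range (Function.minimalPeriod ⇑σ x)).image (fun m => (σ ^ m) x) := by
  apply Finset.Subset.antisymm
  · intro y hy
    rcases Finset.mem_image.mp hy with ⟨m, _, rfl⟩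
    exact Finset.mem_image.mpr ⟨m % _, Finset.mem_range.mpr (Nat.mod_lt _ (mp_pos σ x)),
      pow_mod σ x m⟩
  · intro y hy
    rcases Finset.mem_image.mp hy with ⟨m, hm, rfl⟩
    exact Finset.mem_image.mpr ⟨m, Finset.mem_range.mpr
      (lt_of_lt_of_le (Finset.mem_range.mp hm) (mp_le σ x)), rfl⟩

lemma card_cycleOf (σ : Equiv.Perm (Fin n)) (x : Fin n) :
    (cycleOf σ x).card = Function.minimalPeriod ⇑σ x := by
  rw [cycleOf_eq, Finset.card_image_of_injOn (pow_injOn σ x), Finset.card_range]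

lemma mem_cycleOf_iff {σ : Equiv.Perm (Fin n)} {x y : Fin n} :
    y ∈ cycleOf σ x ↔ ∃ m : ℕ, (σ ^ m) x = y := by
  constructor
  · intro hy
    rcases Finset.mem_image.mp hy with ⟨m, _, rfl⟩
    exact ⟨m, rfl⟩
  · rintro ⟨m, rfl⟩
    exact Finset.mem_image.mpr ⟨m % _, Finset.mem_range.mpr
      (lt_of_lt_of_le (Nat.mod_lt _ (mp_pos σ x)) (mp_le σ x)), pow_mod σ x m⟩

lemma mem_cycleOf_self (σ : Equiv.Perm (Fin n)) (x : Fin n) : x ∈ cycleOf σ x :=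
  mem_cycleOf_iff.mpr ⟨0, by simp⟩

lemma cycleOf_eq_of_mem {σ : Equiv.Perm (Fin n)} {x y : Fin n}
    (hy : y ∈ cycleOf σ x) : cycleOf σ y = cycleOf σ x := by
  rcases mem_cycleOf_iff.mp hy with ⟨a, rfl⟩
  ext z
  rw [mem_cycleOf_iff, mem_cycleOf_iff]
  constructor
  · rintro ⟨m, rfl⟩
    exact ⟨m + a, by rw [pow_add, Equiv.Perm.mul_apply]⟩
  · rintro ⟨m, rfl⟩
    set p := Function.minimalPeriod ⇑σ x with hp
    have hppos : 0 < p := mp_pos σ x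
    set c := a % p with hc
    have hclt : c < p := Nat.mod_lt _ hppos
    refine ⟨m + (p - c), ?_⟩
    have h1 : (σ ^ (m + (p - c))) ((σ ^ a) x) = (σ ^ (m + (p - c) + a)) x := by
      rw [pow_add (σ) (m + (p - c)) a, Equiv.Perm.mul_apply]
    rw [h1]
    have key : (m + (p - c) + a) % p = m % p := by
      have h2 : m + (p - c) + a ≡ m + (p - c) + c [MOD p] :=
        Nat.ModEq.add_left _ (Nat.mod_modEq a p).symm
      have h3 : m + (p - c) + c = m + p := by omega
      have h4 : m + p ≡ m [MOD p] := by
        simpa using (Nat.add_modEq_right (n := p) (a := m))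
      exact (h2.trans (h3 ▸ h4))
    calc (σ ^ (m + (p - c) + a)) x = (σ ^ ((m + (p - c) + a) % p)) x := (pow_mod σ x _).symm
      _ = (σ ^ (m % p)) x := by rw [key]
      _ = (σ ^ m) x := pow_mod σ x m

lemma cycleOf_eq_of_card {k : ℕ} {σ : Equiv.Perm (Fin n)} {i j : Fin n} (hk₁ : n / 2 < k)
    (hi : (cycleOf σ i).card = k) (hj : (cycleOf σ j).card = k) :
    cycleOf σ i = cycleOf σ j := by
  have hnd : ¬ Disjoint (cycleOf σ i) (cycleOf σ j) := by
    intro hdis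
    have hcu := Finset.card_union_of_disjoint hdis
    have hle := Finset.card_le_univ (cycleOf σ i ∪ cycleOf σ j)
    simp only [Finset.card_univ, Fintype.card_fin] at hle
    omega
  obtain ⟨y, hyi, hyj⟩ := Finset.not_disjoint_iff.mp hnd
  rw [← cycleOf_eq_of_mem hyi, cycleOf_eq_of_mem hyj]

/-! ### The map Ψ -/

variable (k : ℕ)

lemma add_lt {j : Fin (n - k)} : k + (j : ℕ) < n := by have := j.isLt; omega

/-- Head set: image of the first `k` positions. -/
def AA (hkn : k ≤ n) (τ : Equiv.Perm (Fin n)) : Finset (Fin n) :=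
  Finset.image (fun i : Fin k => τ ⟨i, lt_of_lt_of_le i.isLt hkn⟩) Finset.univ

/-- Tail set: image of the last `n - k` positions. -/
def BB (τ : Equiv.Perm (Fin n)) : Finset (Fin n) :=
  Finset.image (fun j : Fin (n - k) => τ ⟨k + j, add_lt k⟩) Finset.univ

lemma mem_AA (hkn : k ≤ n) (τ : Equiv.Perm (Fin n)) {x : Fin n} :
    x ∈ AA k hkn τ ↔ (τ.symm x : ℕ) < k := by
  simp only [AA, Finset.mem_image, Finset.mem_univ, true_and]
  constructor
  · rintro ⟨i, rfl⟩
    simp [Equiv.symm_apply_apply]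
  · intro h
    refine ⟨⟨(τ.symm x : ℕ), h⟩, ?_⟩
    simp
lemma mem_BB (τ : Equiv.Perm (Fin n)) {x : Fin n} :
    x ∈ BB k τ ↔ k ≤ (τ.symm x : ℕ) := by
  simp only [BB, Finset.mem_image, Finset.mem_univ, true_and]
  constructor
  · rintro ⟨j, rfl⟩
    simp [Equiv.symm_apply_apply]
  · intro h
    have hlt : (τ.symm x : ℕ) - k < n - k := by have := (τ.symm x).isLt; omega
    refine ⟨⟨(τ.symm x : ℕ) - k, hlt⟩, ?_⟩
    have hvx : (⟨k + ((τ.symm x : ℕ) - k), by have := (τ.symm x).isLt; omega⟩ : Fin n)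
        = τ.symm x := by
      apply Fin.ext; simp; omega
    rw [hvx, Equiv.apply_symm_apply]

lemma card_AA (hkn : k ≤ n) (τ : Equiv.Perm (Fin n)) : (AA k hkn τ).card = k := by
  rw [AA, Finset.card_image_of_injective _ ?_, Finset.card_univ, Fintype.card_fin]
  intro a b hab
  have := τ.injective hab
  exact Fin.ext (by simpa using congrArg Fin.val this)

lemma card_BB (τ : Equiv.Perm (Fin n)) : (BB k τ).card = n - k := by
  rw [BB, Finset.card_image_of_injective _ ?_, Finset.card_univ, Fintype.card_fin]
  intro a b hab
  have := congrArg Fin.val (τ.injective hab)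
  simp only at this
  exact Fin.ext (by omega)

lemma BB_eq_compl (hkn : k ≤ n) (τ : Equiv.Perm (Fin n)) :
    BB k τ = (AA k hkn τ)ᶜ := by
  ext x
  rw [Finset.mem_compl, mem_AA, mem_BB]
  omega

lemma coe_orderIso_congr {m : ℕ} {s t : Finset (Fin n)} (hst : s = t)
    (hs : s.card = m) (ht : t.card = m) (j : Fin m) :
    (s.orderIsoOfFin hs j : Fin n) = (t.orderIsoOfFin ht j : Fin n) := by
  subst hst; rfl

lemma mod_succ_inj {a b : ℕ} (hk0 : 0 < k) (ha : a < k) (hb : b < k)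
    (h : (a + 1) % k = (b + 1) % k) : a = b := by
  rcases Nat.lt_or_ge (a + 1) k with h1 | h1 <;> rcases Nat.lt_or_ge (b + 1) k with h2 | h2
  · rw [Nat.mod_eq_of_lt h1, Nat.mod_eq_of_lt h2] at h; omega
  · have hb1 : b + 1 = k := by omega
    rw [Nat.mod_eq_of_lt h1, hb1, Nat.mod_self] at h; omega
  · have ha1 : a + 1 = k := by omega
    rw [Nat.mod_eq_of_lt h2, ha1, Nat.mod_self] at h; omega
  · omega

lemma succ_mod (hk0 : 0 < k) (m : ℕ) : (m % k + 1) % k = (m + 1) % k := by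
  rw [Nat.add_mod m 1 k, Nat.add_mod (m % k) 1 k, Nat.mod_mod_of_dvd m dvd_rfl]

/-- The underlying function of `Ψ`. -/
def psiFun (hk0 : 0 < k) (hkn : k ≤ n) (τ : Equiv.Perm (Fin n)) (x : Fin n) : Fin n :=
  if h : (τ.symm x : ℕ) < k then
    τ ⟨((τ.symm x : ℕ) + 1) % k, lt_of_lt_of_le (Nat.mod_lt _ hk0) hkn⟩
  else
    τ ⟨k + (((BB k τ).orderIsoOfFin (card_BB k τ)).symm
        ⟨x, (mem_BB k τ).mpr (le_of_not_gt h)⟩ : ℕ), add_lt k⟩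

lemma psiFun_injective (hk0 : 0 < k) (hkn : k ≤ n) (τ : Equiv.Perm (Fin n)) :
    Function.Injective (psiFun k hk0 hkn τ) := by
  intro x y hxy
  simp only [psiFun] at hxy
  split_ifs at hxy with hx hy hy
  · have h1 := congrArg Fin.val (τ.injective hxy)
    simp only at h1
    have := mod_succ_inj k hk0 hx hy h1
    exact τ.symm.injective (Fin.ext this)
  · have h1 := congrArg Fin.val (τ.injective hxy)
    simp only at h1
    have := Nat.mod_lt ((τ.symm x : ℕ) + 1) hk0
    omega
  · have h1 := congrArg Fin.val (τ.injective hxy)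
    simp only at h1
    have := Nat.mod_lt ((τ.symm y : ℕ) + 1) hk0
    omega
  · have h1 := congrArg Fin.val (τ.injective hxy)
    simp only at h1
    have h2 : (((BB k τ).orderIsoOfFin (card_BB k τ)).symm
          ⟨x, (mem_BB k τ).mpr (le_of_not_gt hx)⟩)
        = (((BB k τ).orderIsoOfFin (card_BB k τ)).symm
          ⟨y, (mem_BB k τ).mpr (le_of_not_gt hy)⟩) := Fin.ext (by omega)
    have h3 := ((BB k τ).orderIsoOfFin (card_BB k τ)).symm.injective h2
    exact congrArg Subtype.val h3

/-- The double-counting map. -/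
noncomputable def Psi (hk0 : 0 < k) (hkn : k ≤ n) (τ : Equiv.Perm (Fin n)) :
    Equiv.Perm (Fin n) :=
  Equiv.ofBijective _ (Finite.injective_iff_bijective.mp (psiFun_injective k hk0 hkn τ))

lemma psi_apply_lt (hk0 : 0 < k) (hkn : k ≤ n) (τ : Equiv.Perm (Fin n)) (i : Fin n)
    (hi : (i : ℕ) < k) :
    Psi k hk0 hkn τ (τ i)
      = τ ⟨((i : ℕ) + 1) % k, lt_of_lt_of_le (Nat.mod_lt _ hk0) hkn⟩ := by
  show psiFun k hk0 hkn τ (τ i) = _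
  simp only [psiFun, Equiv.symm_apply_apply]
  rw [dif_pos hi]

lemma psi_apply_bb (hk0 : 0 < k) (hkn : k ≤ n) (τ : Equiv.Perm (Fin n)) (j : Fin (n - k)) :
    Psi k hk0 hkn τ (((BB k τ).orderIsoOfFin (card_BB k τ) j : Fin n))
      = τ ⟨k + (j : ℕ), add_lt k⟩ := by
  have hmem : ((BB k τ).orderIsoOfFin (card_BB k τ) j : Fin n) ∈ BB k τ :=
    ((BB k τ).orderIsoOfFin (card_BB k τ) j).2
  have hge : k ≤ (τ.symm ((BB k τ).orderIsoOfFin (card_BB k τ) j : Fin n) : ℕ) :=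
    (mem_BB k τ).mp hmem
  show psiFun k hk0 hkn τ _ = _
  simp only [psiFun]
  rw [dif_neg (not_lt.mpr hge)]
  congr 2
  have heq : (⟨((BB k τ).orderIsoOfFin (card_BB k τ) j : Fin n), _⟩ :
      {x // x ∈ BB k τ}) = (BB k τ).orderIsoOfFin (card_BB k τ) j := Subtype.ext rfl
  rw [heq, OrderIso.symm_apply_apply]

lemma psi_pow (hk0 : 0 < k) (hkn : k ≤ n) (τ : Equiv.Perm (Fin n)) (m : ℕ) :
    ((Psi k hk0 hkn τ) ^ m) (τ ⟨0, lt_of_lt_of_le hk0 hkn⟩)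
      = τ ⟨m % k, lt_of_lt_of_le (Nat.mod_lt _ hk0) hkn⟩ := by
  induction m with
  | zero => simp
  | succ m ih =>
    rw [pow_succ', Equiv.Perm.mul_apply, ih,
      psi_apply_lt k hk0 hkn τ _ (Nat.mod_lt _ hk0)]
    exact congrArg τ (Fin.ext (succ_mod k hk0 m))

lemma cycleOf_psi (hk0 : 0 < k) (hkn : k ≤ n) (τ : Equiv.Perm (Fin n)) :
    cycleOf (Psi k hk0 hkn τ) (τ ⟨0, lt_of_lt_of_le hk0 hkn⟩) = AA k hkn τ := by
  ext y
  rw [mem_cycleOf_iff, mem_AA]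
  constructor
  · rintro ⟨m, rfl⟩
    rw [psi_pow]
    simp [Equiv.symm_apply_apply]
    exact Nat.mod_lt _ hk0
  · intro h
    refine ⟨(τ.symm y : ℕ), ?_⟩
    rw [psi_pow]
    conv_rhs => rw [← Equiv.apply_symm_apply τ y]
    exact congrArg τ (Fin.ext (Nat.mod_eq_of_lt h))

lemma psi_inj_fiber (hk0 : 0 < k) (hkn : k ≤ n) {τ τ' : Equiv.Perm (Fin n)}
    (hΨ : Psi k hk0 hkn τ = Psi k hk0 hkn τ')
    (h0 : τ ⟨0, lt_of_lt_of_le hk0 hkn⟩ = τ' ⟨0, lt_of_lt_of_le hk0 hkn⟩) : τ = τ' := by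
  have hhead : ∀ i : Fin n, (i : ℕ) < k → τ i = τ' i := by
    intro i hi
    have h1 := psi_pow k hk0 hkn τ (i : ℕ)
    have h2 := psi_pow k hk0 hkn τ' (i : ℕ)
    rw [hΨ, h0] at h1
    have h3 := h1.symm.trans h2
    have h4 : (⟨(i : ℕ) % k, lt_of_lt_of_le (Nat.mod_lt _ hk0) hkn⟩ : Fin n) = i :=
      Fin.ext (Nat.mod_eq_of_lt hi)
    rwa [h4] at h3
  have hA : AA k hkn τ = AA k hkn τ' := by
    rw [← cycleOf_psi k hk0 hkn τ, ← cycleOf_psi k hk0 hkn τ', hΨ, h0]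
  have hB : BB k τ = BB k τ' := by
    rw [BB_eq_compl k hkn τ, BB_eq_compl k hkn τ', hA]
  have htail : ∀ j : Fin (n - k), τ ⟨k + (j : ℕ), add_lt k⟩ = τ' ⟨k + (j : ℕ), add_lt k⟩ := by
    intro j
    have h1 := psi_apply_bb k hk0 hkn τ j
    have h2 := psi_apply_bb k hk0 hkn τ' j
    have hc := coe_orderIso_congr hB (card_BB k τ) (card_BB k τ') j
    rw [← h1, ← h2, hΨ, hc]
  apply Equiv.ext
  intro i
  by_cases hi : (i : ℕ) < k
  · exact hhead i hi
  · have hj : (i : ℕ) - k < n - k := by have := i.isLt; omega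
    have h5 := htail ⟨(i : ℕ) - k, hj⟩
    have h4 : (⟨k + ((⟨(i : ℕ) - k, hj⟩ : Fin (n - k)) : ℕ), add_lt k⟩ : Fin n) = i :=
      Fin.ext (by show k + ((i : ℕ) - k) = (i : ℕ); omega)
    rwa [h4] at h5

lemma apply_mem_cycleOf_iff (σ : Equiv.Perm (Fin n)) (a x : Fin n) :
    σ x ∈ cycleOf σ a ↔ x ∈ cycleOf σ a := by
  rw [mem_cycleOf_iff, mem_cycleOf_iff]
  constructor
  · rintro ⟨m, hm⟩
    rcases m with _ | m'
    · have hm0 : a = σ x := by simpa using hm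
      have hpa : (σ ^ Function.minimalPeriod ⇑σ a) a = a := by
        have := pow_mod σ a (Function.minimalPeriod ⇑σ a)
        simpa [Nat.mod_self] using this.symm
      have hppos := mp_pos σ a
      refine ⟨Function.minimalPeriod ⇑σ a - 1, σ.injective ?_⟩
      rw [← Equiv.Perm.mul_apply, ← pow_succ']
      have hsub : Function.minimalPeriod ⇑σ a - 1 + 1 = Function.minimalPeriod ⇑σ a := by
        omega
      rw [hsub, hpa, hm0]
    · refine ⟨m', σ.injective ?_⟩
      rw [← Equiv.Perm.mul_apply, ← pow_succ']
      exact hm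
  · rintro ⟨m, rfl⟩
    exact ⟨m + 1, by rw [pow_succ', Equiv.Perm.mul_apply]⟩

lemma psi_surj (hk0 : 0 < k) (hkn : k ≤ n) (σ : Equiv.Perm (Fin n)) (a : Fin n)
    (ha : (cycleOf σ a).card = k) :
    ∃ τ : Equiv.Perm (Fin n), Psi k hk0 hkn τ = σ ∧ τ ⟨0, lt_of_lt_of_le hk0 hkn⟩ = a := by
  classical
  have hp : Function.minimalPeriod ⇑σ a = k := by rw [← card_cycleOf, ha]
  have hB₀ : ((cycleOf σ a)ᶜ : Finset (Fin n)).card = n - k := by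
    rw [Finset.card_compl, ha, Fintype.card_fin]
  set B₀ := ((cycleOf σ a)ᶜ : Finset (Fin n)) with hB₀def
  set e := B₀.orderIsoOfFin hB₀ with hedef
  set t : Fin n → Fin n := fun i =>
    if h : (i : ℕ) < k then (σ ^ (i : ℕ)) a
    else σ (e ⟨(i : ℕ) - k, by have := i.isLt; omega⟩ : Fin n) with htdef
  have hnotmem : ∀ (j : Fin (n - k)), σ (e j : Fin n) ∉ cycleOf σ a := by
    intro j hmem
    have h3 : (e j : Fin n) ∈ B₀ := (e j).2
    have h4 : (e j : Fin n) ∉ cycleOf σ a := Finset.mem_compl.mp h3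
    exact h4 ((apply_mem_cycleOf_iff σ a _).mp hmem)
  have hinj : Function.Injective t := by
    intro x y hxy
    simp only [htdef] at hxy
    split_ifs at hxy with hx hy hy
    · refine Fin.ext (Function.iterate_injOn_Iio_minimalPeriod ?_ ?_ hxy)
      · rw [Set.mem_Iio, hp]; exact hx
      · rw [Set.mem_Iio, hp]; exact hy
    · exact absurd (hxy ▸ mem_cycleOf_iff.mpr ⟨(x : ℕ), rfl⟩) (hnotmem _)
    · exact absurd (hxy.symm ▸ mem_cycleOf_iff.mpr ⟨(y : ℕ), rfl⟩) (hnotmem _)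
    · have h4 := σ.injective hxy
      have h5 := e.injective (Subtype.ext h4)
      have h6 := congrArg Fin.val h5
      simp only at h6
      exact Fin.ext (by omega)
  set τ : Equiv.Perm (Fin n) := Equiv.ofBijective t (Finite.injective_iff_bijective.mp hinj)
    with hτdef
  have hhead : ∀ (i : ℕ) (h : i < k), τ ⟨i, lt_of_lt_of_le h hkn⟩ = (σ ^ i) a := by
    intro i h
    show t _ = _
    simp only [htdef]
    rw [dif_pos h]
  have htail : ∀ j : Fin (n - k), τ ⟨k + (j : ℕ), add_lt k⟩ = σ (e j : Fin n) := by
    intro j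
    show t _ = _
    simp only [htdef]
    rw [dif_neg (by simp : ¬ ((⟨k + (j : ℕ), add_lt k⟩ : Fin n) : ℕ) < k)]
    have hjj : ∀ (j' : Fin (n - k)), j' = j → σ (e j' : Fin n) = σ (e j : Fin n) := by
      rintro j' rfl; rfl
    apply hjj
    refine Fin.ext ?_
    show k + (j : ℕ) - k = (j : ℕ)
    omega
  have hA : AA k hkn τ = cycleOf σ a := by
    ext y
    rw [mem_cycleOf_iff]
    simp only [AA, Finset.mem_image, Finset.mem_univ, true_and]
    constructor
    · rintro ⟨i, rfl⟩
      exact ⟨(i : ℕ), (hhead (i : ℕ) i.isLt).symm⟩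
    · rintro ⟨m, rfl⟩
      refine ⟨⟨m % k, Nat.mod_lt _ hk0⟩, ?_⟩
      have e3 := pow_mod σ a m
      rw [hp] at e3
      exact (hhead (m % k) (Nat.mod_lt _ hk0)).trans e3
  have hB : BB k τ = B₀ := by
    rw [BB_eq_compl k hkn, hA]
  have hPsi : Psi k hk0 hkn τ = σ := by
    apply Equiv.ext
    intro x
    by_cases hx : x ∈ AA k hkn τ
    · simp only [AA, Finset.mem_image, Finset.mem_univ, true_and] at hx
      obtain ⟨i, rfl⟩ := hx
      have e1 := psi_apply_lt k hk0 hkn τ ⟨(i : ℕ), lt_of_lt_of_le i.isLt hkn⟩ i.isLt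
      have e2 := hhead (((i : ℕ) + 1) % k) (Nat.mod_lt _ hk0)
      have e3 := pow_mod σ a ((i : ℕ) + 1)
      rw [hp] at e3
      have e4 := hhead (i : ℕ) i.isLt
      rw [e1, e2, e3, e4, pow_succ', Equiv.Perm.mul_apply]
    · have hxB : x ∈ BB k τ := by
        rw [BB_eq_compl k hkn, Finset.mem_compl]; exact hx
      set j := ((BB k τ).orderIsoOfFin (card_BB k τ)).symm ⟨x, hxB⟩ with hjdef
      have hxj : ((BB k τ).orderIsoOfFin (card_BB k τ) j : Fin n) = x := by
        rw [hjdef, OrderIso.apply_symm_apply]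
      have e1 := psi_apply_bb k hk0 hkn τ j
      rw [hxj] at e1
      rw [e1, htail j]
      have hc := coe_orderIso_congr hB (card_BB k τ) hB₀ j
      rw [hedef, ← hc, hxj]
  refine ⟨τ, hPsi, ?_⟩
  rw [hhead 0 hk0]
  simp

end CardPermAux

/-- For `n ≥ 1` and `n/2 < k ≤ n`, the number of permutations of `Fin n` containing a
cycle of length exactly `k` equals `n!/k`.  (Since `k > n/2`, such a cycle is unique.) -/
theorem card_perms_with_k_cycle (n k : ℕ) (hn : 1 ≤ n) (hk₁ : n / 2 < k) (hk₂ : k ≤ n) :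
    (Finset.univ.filter
        (fun σ : Equiv.Perm (Fin n) => ∃ i : Fin n, (cycleOf σ i).card = k)).card
      = n.factorial / k := by
  classical
  open CardPermAux in
  have hk0 : 0 < k := lt_of_le_of_lt (Nat.zero_le _) hk₁
  set S := Finset.univ.filter
      (fun σ : Equiv.Perm (Fin n) => ∃ i : Fin n, (cycleOf σ i).card = k) with hSdef
  have hmap : ∀ τ : Equiv.Perm (Fin n), τ ∈ Finset.univ → Psi k hk0 hk₂ τ ∈ S := by
    intro τ _
    rw [hSdef, Finset.mem_filter]
    exact ⟨Finset.mem_univ _, ⟨τ ⟨0, lt_of_lt_of_le hk0 hk₂⟩,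
      by rw [cycleOf_psi k hk0 hk₂ τ]; exact card_AA k hk₂ τ⟩⟩
  have hsum := Finset.card_eq_sum_card_fiberwise hmap
  have hfiber : ∀ σ ∈ S, (Finset.univ.filter fun τ => Psi k hk0 hk₂ τ = σ).card = k := by
    intro σ hσ
    rw [hSdef, Finset.mem_filter] at hσ
    obtain ⟨-, i₀, hi₀⟩ := hσ
    have hbij : (Finset.univ.filter fun τ => Psi k hk0 hk₂ τ = σ).card
        = (cycleOf σ i₀).card := by
      apply Finset.card_bij (fun τ _ => τ ⟨0, lt_of_lt_of_le hk0 hk₂⟩)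
      · intro τ hτ
        rw [Finset.mem_filter] at hτ
        obtain ⟨-, hτσ⟩ := hτ
        have h1 : (cycleOf σ (τ ⟨0, lt_of_lt_of_le hk0 hk₂⟩)).card = k := by
          rw [← hτσ, cycleOf_psi k hk0 hk₂ τ]
          exact card_AA k hk₂ τ
        have h2 := cycleOf_eq_of_card hk₁ h1 hi₀
        rw [← h2]
        exact mem_cycleOf_self σ _
      · intro τ hτ τ' hτ' h0
        rw [Finset.mem_filter] at hτ hτ'
        exact psi_inj_fiber k hk0 hk₂ (hτ.2.trans hτ'.2.symm) h0
      · intro a ha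
        have h1 : (cycleOf σ a).card = k := by
          rw [cycleOf_eq_of_mem ha]; exact hi₀
        obtain ⟨τ, hτ1, hτ2⟩ := psi_surj k hk0 hk₂ σ a h1
        exact ⟨τ, Finset.mem_filter.mpr ⟨Finset.mem_univ _, hτ1⟩, hτ2⟩
    rw [hbij, hi₀]
  have hcard : (Finset.univ : Finset (Equiv.Perm (Fin n))).card = S.card * k := by
    rw [hsum, Finset.sum_congr rfl hfiber, Finset.sum_const, smul_eq_mul]
  have huniv : (Finset.univ : Finset (Equiv.Perm (Fin n))).card = n.factorial := by
    rw [Finset.card_univ, Fintype.card_perm, Fintype.card_fin]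
  rw [hSdef] at hcard
  exact (Nat.div_eq_of_eq_mul_left hk0 (huniv.symm.trans hcard)).symm
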